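/- Energy identity: under the resolvent equations λρ̃ = -J̃' + f₁ and λJ̃ = αρ̃' + βJ̃' + μJ̃'' + (k²/2)ρ̃''' + f₂ with sufficiently regular decaying solutions, one has Re(λ)(-α∫|ρ̃|² + ∫|J̃|² + (k²/2)∫|ρ̃'|²) + μ∫|J̃'|² = ∫Re(-α f₁ conj(ρ̃) + f₂ conj(J̃)) + (k²/2)∫Re(f₁' conj(ρ̃')). -/

import Mathlib

open MeasureTheory Filter

/-- Membership in the Sobolev space `H^k(ℝ, ℂ)`. -/
def MemH (k : ℕ) (f : ℝ → ℂ) : Prop :=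
  ContDiff ℝ k f ∧ ∀ i ≤ k, MemLp (iteratedDeriv i f) 2 volume


open MeasureTheory Filter Complex

local notation "conj'" => starRingEnd ℂ

lemma l2mul {f g : ℝ → ℂ} (hf : MemLp f 2 volume) (hg : MemLp g 2 volume) :
    Integrable (fun x => f x * g x) volume := by
  rw [← memLp_one_iff_integrable]
  have h := hg.smul (p := 2) (q := 2) (r := 1) hf
  simpa [smul_eq_mul, Pi.mul_def] using h

lemma l2conj {f : ℝ → ℂ} (hf : MemLp f 2 volume) :
    MemLp (fun x => conj' (f x)) 2 volume :=
  hf.of_le (Complex.continuous_conj.comp_aestronglyMeasurable hf.1)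
    (Filter.Eventually.of_forall fun x => by simp)

lemma intg {f g : ℝ → ℂ} (hf : MemLp f 2 volume) (hg : MemLp g 2 volume) :
    Integrable (fun x => f x * conj' (g x)) volume :=
  l2mul hf (l2conj hg)

lemma cint_re {f : ℝ → ℂ} (hf : Integrable f volume) :
    ∫ x, (f x).re = (∫ x, f x).re := by
  simpa using integral_re hf

lemma cint_re' {f : ℝ → ℂ} (hf : Integrable f volume) :
    Integrable (fun x => (f x).re) volume := by
  simpa using hf.re

lemma re_sym (a b : ℂ) : (a * conj' b).re = (b * conj' a).re := by
  have : b * conj' a = conj' (a * conj' b) := by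
    rw [map_mul]; simp [mul_comm]
  rw [this, Complex.conj_re]

lemma re_self (a : ℂ) : (a * conj' a).re = ‖a‖ ^ 2 := by
  rw [Complex.mul_conj]
  simp [Complex.normSq_eq_norm_sq, ← Complex.ofReal_pow]

lemma re_lam (lam a : ℂ) : (lam * a * conj' a).re = lam.re * ‖a‖ ^ 2 := by
  rw [mul_assoc, Complex.mul_conj]
  simp [Complex.mul_re, Complex.normSq_eq_norm_sq, ← Complex.ofReal_pow]

lemma deriv_conj' {w : ℝ → ℂ} (hw : Differentiable ℝ w) :
    deriv (fun x => conj' (w x)) = fun x => conj' (deriv w x) := by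
  funext x
  have h := Complex.conjCLE.toContinuousLinearMap.hasFDerivAt.comp_hasDerivAt x (hw x).hasDerivAt
  simpa [Complex.conjCLE_apply, Function.comp_def, Complex.conjCAE_apply] using h.deriv

lemma diff_conj' {w : ℝ → ℂ} (hw : Differentiable ℝ w) :
    Differentiable ℝ (fun x => conj' (w x)) := fun x =>
  (Complex.conjCLE.toContinuousLinearMap.hasFDerivAt.comp_hasDerivAt x (hw x).hasDerivAt).differentiableAt

lemma int_deriv_eq_zero {g : ℝ → ℂ} (hg : Differentiable ℝ g)
    (hint : Integrable (deriv g) volume) (hdecay : Tendsto g (cocompact ℝ) (nhds 0)) :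
    ∫ x, deriv g x = 0 := by
  rw [cocompact_eq_atBot_atTop] at hdecay
  have hbot : Tendsto g atBot (nhds 0) := hdecay.mono_left le_sup_left
  have htop : Tendsto g atTop (nhds 0) := hdecay.mono_left le_sup_right
  have h1 : Tendsto (fun b : ℝ => ∫ x in (-b)..b, deriv g x) atTop
      (nhds (∫ x, deriv g x)) :=
    intervalIntegral_tendsto_integral hint tendsto_neg_atTop_atBot tendsto_id
  have h2 : ∀ b : ℝ, ∫ x in (-b)..b, deriv g x = g b - g (-b) := fun b =>
    intervalIntegral.integral_deriv_eq_sub (fun x _ => hg x)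
      hint.intervalIntegrable
  have h3 : Tendsto (fun b : ℝ => g b - g (-b)) atTop (nhds 0) := by
    simpa using htop.sub (hbot.comp tendsto_neg_atTop_atBot)
  rw [funext h2] at h1
  exact tendsto_nhds_unique h1 h3

lemma int_parts {u v : ℝ → ℂ} (hu : Differentiable ℝ u) (hv : Differentiable ℝ v)
    (h1 : Integrable (fun x => deriv u x * v x) volume)
    (h2 : Integrable (fun x => u x * deriv v x) volume)
    (hdecay : Tendsto (fun x => u x * v x) (cocompact ℝ) (nhds 0)) :
    ∫ x, deriv u x * v x = - ∫ x, u x * deriv v x := by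
  have hdm : deriv (fun x => u x * v x)
      = fun x => deriv u x * v x + u x * deriv v x := by
    funext x; exact deriv_fun_mul (hu x) (hv x)
  have h0 := int_deriv_eq_zero (g := fun x => u x * v x) (hu.mul hv) (by rw [hdm]; exact h1.add h2) hdecay
  rw [hdm, integral_add h1 h2] at h0
  exact eq_neg_of_add_eq_zero_left h0

lemma int_parts_conj {u w : ℝ → ℂ} (hu : Differentiable ℝ u) (hw : Differentiable ℝ w)
    (h1 : Integrable (fun x => deriv u x * conj' (w x)) volume)
    (h2 : Integrable (fun x => u x * conj' (deriv w x)) volume)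
    (hdecu : Tendsto u (cocompact ℝ) (nhds 0))
    (hdecw : Tendsto w (cocompact ℝ) (nhds 0)) :
    ∫ x, deriv u x * conj' (w x) = - ∫ x, u x * conj' (deriv w x) := by
  have hv := diff_conj' hw
  have hdv := deriv_conj' hw
  have hdec : Tendsto (fun x => u x * conj' (w x)) (cocompact ℝ) (nhds 0) := by
    have hc : Tendsto (fun x => conj' (w x)) (cocompact ℝ) (nhds 0) := by
      simpa [Function.comp_def] using (Complex.continuous_conj.tendsto 0).comp hdecw
    simpa using hdecu.mul hc
  have h := int_parts hu hv h1 (by simp only [hdv]; exact h2) hdec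
  simpa only [hdv] using h

lemma re_parts {u w : ℝ → ℂ} (hu : Differentiable ℝ u) (hw : Differentiable ℝ w)
    (h1 : Integrable (fun x => deriv u x * conj' (w x)) volume)
    (h2 : Integrable (fun x => u x * conj' (deriv w x)) volume)
    (hdecu : Tendsto u (cocompact ℝ) (nhds 0))
    (hdecw : Tendsto w (cocompact ℝ) (nhds 0)) :
    ∫ x, (deriv u x * conj' (w x)).re = - ∫ x, (u x * conj' (deriv w x)).re := by
  rw [cint_re h1, cint_re h2, int_parts_conj hu hw h1 h2 hdecu hdecw]
  simp

lemma cd_deriv {f : ℝ → ℂ} {n : ℕ} (h : ContDiff ℝ (n + 1 : ℕ) f) :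
    ContDiff ℝ (n : ℕ) (deriv f) := by
  have h' : ContDiff ℝ ((n : WithTop ℕ∞) + 1) f := by exact_mod_cast h
  exact (contDiff_succ_iff_deriv.mp h').2.2

lemma itd2 (f : ℝ → ℂ) : iteratedDeriv 2 f = deriv (deriv f) := by
  show iteratedDeriv (1 + 1) f = _
  rw [iteratedDeriv_succ, iteratedDeriv_one]

lemma itd3 (f : ℝ → ℂ) : iteratedDeriv 3 f = deriv (deriv (deriv f)) := by
  show iteratedDeriv (2 + 1) f = _
  rw [iteratedDeriv_succ, itd2]


theorem stmt_14 (α β μ k : ℝ) (hμ : 0 < μ) (hk : 0 < k) (lam : ℂ)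
    (ρ J f1 f2 : ℝ → ℂ)
    (hρ : MemH 3 ρ) (hJ : MemH 2 J) (hf1 : MemH 1 f1)
    (hf2 : MemLp f2 2 volume)
    (heq1 : ∀ y : ℝ, lam * ρ y = -deriv J y + f1 y)
    (heq2 : ∀ y : ℝ, lam * J y
        = (α : ℂ) * deriv ρ y + (β : ℂ) * deriv J y + (μ : ℂ) * deriv (deriv J) y
          + ((k : ℂ) ^ 2 / 2) * deriv (deriv (deriv ρ)) y + f2 y)
    (hdecayρ : Tendsto ρ (cocompact ℝ) (nhds 0))
    (hdecayρ' : Tendsto (deriv ρ) (cocompact ℝ) (nhds 0))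
    (hdecayρ'' : Tendsto (deriv (deriv ρ)) (cocompact ℝ) (nhds 0))
    (hdecayJ : Tendsto J (cocompact ℝ) (nhds 0))
    (hdecayJ' : Tendsto (deriv J) (cocompact ℝ) (nhds 0)) :
    lam.re * (-α * (∫ y : ℝ, ‖ρ y‖ ^ 2) + (∫ y : ℝ, ‖J y‖ ^ 2)
          + (k ^ 2 / 2) * (∫ y : ℝ, ‖deriv ρ y‖ ^ 2))
        + μ * (∫ y : ℝ, ‖deriv J y‖ ^ 2)
      = (∫ y : ℝ, (-(α : ℂ) * f1 y * (starRingEnd ℂ) (ρ y)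
            + f2 y * (starRingEnd ℂ) (J y)).re)
        + (k ^ 2 / 2) * ∫ y : ℝ, (deriv f1 y * (starRingEnd ℂ) (deriv ρ y)).re := by
  -- L² facts
  have hρ0 : MemLp ρ 2 volume := by simpa [iteratedDeriv_zero] using hρ.2 0 (by norm_num)
  have hρ1 : MemLp (deriv ρ) 2 volume := by
    simpa [iteratedDeriv_one] using hρ.2 1 (by norm_num)
  have hρ2 : MemLp (deriv (deriv ρ)) 2 volume := by simpa [itd2] using hρ.2 2 (by norm_num)
  have hρ3 : MemLp (deriv (deriv (deriv ρ))) 2 volume := by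
    simpa [itd3] using hρ.2 3 (by norm_num)
  have hJ0 : MemLp J 2 volume := by simpa [iteratedDeriv_zero] using hJ.2 0 (by norm_num)
  have hJ1 : MemLp (deriv J) 2 volume := by
    simpa [iteratedDeriv_one] using hJ.2 1 (by norm_num)
  have hJ2 : MemLp (deriv (deriv J)) 2 volume := by simpa [itd2] using hJ.2 2 (by norm_num)
  have hf10 : MemLp f1 2 volume := by simpa [iteratedDeriv_zero] using hf1.2 0 (by norm_num)
  have hf11 : MemLp (deriv f1) 2 volume := by
    simpa [iteratedDeriv_one] using hf1.2 1 (by norm_num)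
  -- differentiability facts
  have hρd : Differentiable ℝ ρ := hρ.1.differentiable (by norm_num)
  have hρ'c : ContDiff ℝ (2 : ℕ) (deriv ρ) := cd_deriv (n := 2) hρ.1
  have hρ'd : Differentiable ℝ (deriv ρ) := hρ'c.differentiable (by norm_num)
  have hρ''d : Differentiable ℝ (deriv (deriv ρ)) :=
    (cd_deriv (n := 1) hρ'c).differentiable (by norm_num)
  have hJd : Differentiable ℝ J := hJ.1.differentiable (by norm_num)
  have hJ'd : Differentiable ℝ (deriv J) :=
    (cd_deriv (n := 1) hJ.1).differentiable (by norm_num)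
  have hf1d : Differentiable ℝ f1 := hf1.1.differentiable (by norm_num)
  -- integrability of the atomic products
  have iT1 : Integrable (fun y => deriv J y * conj' (ρ y)) volume := intg hJ1 hρ0
  have iT2 : Integrable (fun y => f1 y * conj' (ρ y)) volume := intg hf10 hρ0
  have iT3 : Integrable (fun y => deriv ρ y * conj' (J y)) volume := intg hρ1 hJ0
  have iT4 : Integrable (fun y => deriv J y * conj' (J y)) volume := intg hJ1 hJ0
  have iT5 : Integrable (fun y => deriv (deriv J) y * conj' (J y)) volume := intg hJ2 hJ0
  have iT6 : Integrable (fun y => deriv (deriv (deriv ρ)) y * conj' (J y)) volume :=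
    intg hρ3 hJ0
  have iT7 : Integrable (fun y => f2 y * conj' (J y)) volume := intg hf2 hJ0
  have iT8 : Integrable (fun y => deriv (deriv J) y * conj' (deriv ρ y)) volume :=
    intg hJ2 hρ1
  have iT9 : Integrable (fun y => deriv f1 y * conj' (deriv ρ y)) volume := intg hf11 hρ1
  have iP1b : Integrable (fun y => J y * conj' (deriv ρ y)) volume := intg hJ0 hρ1
  have iP2b : Integrable (fun y => J y * conj' (deriv J y)) volume := intg hJ0 hJ1
  have iP3b : Integrable (fun y => deriv J y * conj' (deriv J y)) volume := intg hJ1 hJ1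
  have iP4b : Integrable (fun y => deriv (deriv ρ) y * conj' (deriv J y)) volume :=
    intg hρ2 hJ1
  have iP5b : Integrable (fun y => deriv J y * conj' (deriv (deriv ρ) y)) volume :=
    intg hJ1 hρ2
  -- differentiated first equation
  have heq1' : ∀ y, lam * deriv ρ y = -(deriv (deriv J) y) + deriv f1 y := by
    intro y
    have h1 : deriv (fun y => lam * ρ y) y = lam * deriv ρ y :=
      deriv_const_mul lam (hρd y)
    have h2 : deriv (fun y => -deriv J y + f1 y) y
        = -(deriv (deriv J) y) + deriv f1 y := by
      rw [deriv_fun_add (f := fun y => -deriv J y) ((hJ'd y).neg) (hf1d y), deriv.fun_neg]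
    rw [← h1, funext heq1, h2]
  -- integration by parts identities
  have P1 := re_parts hJd hρd iT1 iP1b hdecayJ hdecayρ
  have P2 := re_parts hJd hJd iT4 iP2b hdecayJ hdecayJ
  have P3 := re_parts hJ'd hJd iT5 iP3b hdecayJ' hdecayJ
  have P4 := re_parts hρ''d hJd iT6 iP4b hdecayρ'' hdecayJ
  have P5 := re_parts hJ'd hρ'd iT8 iP5b hdecayJ' hdecayρ'
  -- F1 : T1 = -T3
  have F1 : ∫ y, (deriv J y * conj' (ρ y)).re
      = -(∫ y, (deriv ρ y * conj' (J y)).re) := by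
    rw [P1]
    have h : ∀ y : ℝ, (J y * conj' (deriv ρ y)).re = (deriv ρ y * conj' (J y)).re :=
      fun y => re_sym _ _
    simp only [h]
  -- F2 : T4 = 0
  have F2 : ∫ y, (deriv J y * conj' (J y)).re = 0 := by
    have h : ∀ y : ℝ, (J y * conj' (deriv J y)).re = (deriv J y * conj' (J y)).re :=
      fun y => re_sym _ _
    rw [show (∫ y, (J y * conj' (deriv J y)).re) = ∫ y, (deriv J y * conj' (J y)).re
      from by simp only [h]] at P2
    linarith
  -- F3 : T5 = -∫‖J'‖²
  have F3 : ∫ y, (deriv (deriv J) y * conj' (J y)).re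
      = -(∫ y : ℝ, ‖deriv J y‖ ^ 2) := by
    rw [P3]
    have h : ∀ y : ℝ, (deriv J y * conj' (deriv J y)).re = ‖deriv J y‖ ^ 2 :=
      fun y => re_self _
    simp only [h]
  -- F4 : T6 = T8
  have F4 : ∫ y, (deriv (deriv (deriv ρ)) y * conj' (J y)).re
      = ∫ y, (deriv (deriv J) y * conj' (deriv ρ y)).re := by
    rw [P4, P5]
    have h : ∀ y : ℝ, (deriv J y * conj' (deriv (deriv ρ) y)).re
        = (deriv (deriv ρ) y * conj' (deriv J y)).re := fun y => re_sym _ _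
    simp only [h]
  -- key identity 1
  have key1 : lam.re * (∫ y : ℝ, ‖ρ y‖ ^ 2)
      = (∫ y, (f1 y * conj' (ρ y)).re) - ∫ y, (deriv J y * conj' (ρ y)).re := by
    have hpt : ∀ y : ℝ, lam.re * ‖ρ y‖ ^ 2
        = (f1 y * conj' (ρ y)).re - (deriv J y * conj' (ρ y)).re := by
      intro y
      rw [← re_lam lam (ρ y), heq1 y, show (-deriv J y + f1 y) * conj' (ρ y)
        = f1 y * conj' (ρ y) - deriv J y * conj' (ρ y) from by ring, Complex.sub_re]
    rw [← integral_const_mul]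
    simp only [hpt]
    exact integral_sub (cint_re' iT2) (cint_re' iT1)
  -- key identity 3
  have key3 : lam.re * (∫ y : ℝ, ‖deriv ρ y‖ ^ 2)
      = (∫ y, (deriv f1 y * conj' (deriv ρ y)).re)
        - ∫ y, (deriv (deriv J) y * conj' (deriv ρ y)).re := by
    have hpt : ∀ y : ℝ, lam.re * ‖deriv ρ y‖ ^ 2
        = (deriv f1 y * conj' (deriv ρ y)).re
          - (deriv (deriv J) y * conj' (deriv ρ y)).re := by
      intro y
      rw [← re_lam lam (deriv ρ y), heq1' y,
        show (-deriv (deriv J) y + deriv f1 y) * conj' (deriv ρ y)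
        = deriv f1 y * conj' (deriv ρ y)
          - deriv (deriv J) y * conj' (deriv ρ y) from by ring, Complex.sub_re]
    rw [← integral_const_mul]
    simp only [hpt]
    exact integral_sub (cint_re' iT9) (cint_re' iT8)
  -- key identity 2
  have hkc : ((k : ℂ) ^ 2 / 2) = ((k ^ 2 / 2 : ℝ) : ℂ) := by push_cast; ring
  have key2 : lam.re * (∫ y : ℝ, ‖J y‖ ^ 2)
      = α * (∫ y, (deriv ρ y * conj' (J y)).re)
        + (β * (∫ y, (deriv J y * conj' (J y)).re)
          + (μ * (∫ y, (deriv (deriv J) y * conj' (J y)).re)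
            + ((k ^ 2 / 2) * (∫ y, (deriv (deriv (deriv ρ)) y * conj' (J y)).re)
              + ∫ y, (f2 y * conj' (J y)).re))) := by
    have hpt : ∀ y : ℝ, lam.re * ‖J y‖ ^ 2
        = α * (deriv ρ y * conj' (J y)).re
          + (β * (deriv J y * conj' (J y)).re
            + (μ * (deriv (deriv J) y * conj' (J y)).re
              + ((k ^ 2 / 2) * (deriv (deriv (deriv ρ)) y * conj' (J y)).re
                + (f2 y * conj' (J y)).re))) := by
      intro y
      rw [← re_lam lam (J y), heq2 y, hkc]
      simp only [add_mul, mul_assoc, Complex.add_re, Complex.re_ofReal_mul]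
      ring
    have e4 : (∫ y : ℝ, ((k ^ 2 / 2) * (deriv (deriv (deriv ρ)) y * conj' (J y)).re
          + (f2 y * conj' (J y)).re))
        = (∫ y : ℝ, (k ^ 2 / 2) * (deriv (deriv (deriv ρ)) y * conj' (J y)).re)
          + ∫ y : ℝ, (f2 y * conj' (J y)).re :=
      integral_add ((cint_re' iT6).const_mul _) (cint_re' iT7)
    have e3 : (∫ y : ℝ, (μ * (deriv (deriv J) y * conj' (J y)).re
          + ((k ^ 2 / 2) * (deriv (deriv (deriv ρ)) y * conj' (J y)).re
            + (f2 y * conj' (J y)).re)))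
        = (∫ y : ℝ, μ * (deriv (deriv J) y * conj' (J y)).re)
          + ∫ y : ℝ, ((k ^ 2 / 2) * (deriv (deriv (deriv ρ)) y * conj' (J y)).re
            + (f2 y * conj' (J y)).re) :=
      integral_add ((cint_re' iT5).const_mul _)
        (((cint_re' iT6).const_mul _).add (cint_re' iT7))
    have e2 : (∫ y : ℝ, (β * (deriv J y * conj' (J y)).re
          + (μ * (deriv (deriv J) y * conj' (J y)).re
            + ((k ^ 2 / 2) * (deriv (deriv (deriv ρ)) y * conj' (J y)).re
              + (f2 y * conj' (J y)).re))))
        = (∫ y : ℝ, β * (deriv J y * conj' (J y)).re)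
          + ∫ y : ℝ, (μ * (deriv (deriv J) y * conj' (J y)).re
            + ((k ^ 2 / 2) * (deriv (deriv (deriv ρ)) y * conj' (J y)).re
              + (f2 y * conj' (J y)).re)) :=
      integral_add ((cint_re' iT4).const_mul _)
        (((cint_re' iT5).const_mul _).add
          (((cint_re' iT6).const_mul _).add (cint_re' iT7)))
    have e1 : (∫ y : ℝ, (α * (deriv ρ y * conj' (J y)).re
          + (β * (deriv J y * conj' (J y)).re
            + (μ * (deriv (deriv J) y * conj' (J y)).re
              + ((k ^ 2 / 2) * (deriv (deriv (deriv ρ)) y * conj' (J y)).re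
                + (f2 y * conj' (J y)).re)))))
        = (∫ y : ℝ, α * (deriv ρ y * conj' (J y)).re)
          + ∫ y : ℝ, (β * (deriv J y * conj' (J y)).re
            + (μ * (deriv (deriv J) y * conj' (J y)).re
              + ((k ^ 2 / 2) * (deriv (deriv (deriv ρ)) y * conj' (J y)).re
                + (f2 y * conj' (J y)).re))) :=
      integral_add ((cint_re' iT3).const_mul _)
        (((cint_re' iT4).const_mul _).add (((cint_re' iT5).const_mul _).add
          (((cint_re' iT6).const_mul _).add (cint_re' iT7))))
    rw [← integral_const_mul]
    simp only [hpt]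
    rw [e1, e2, e3, e4, integral_const_mul, integral_const_mul, integral_const_mul,
      integral_const_mul]
  -- split the right-hand side of the goal
  have rhs1 : (∫ y : ℝ, (-(α : ℂ) * f1 y * (starRingEnd ℂ) (ρ y)
        + f2 y * (starRingEnd ℂ) (J y)).re)
      = (∫ y, (f2 y * conj' (J y)).re) - α * ∫ y, (f1 y * conj' (ρ y)).re := by
    have hpt : ∀ y : ℝ, (-(α : ℂ) * f1 y * (starRingEnd ℂ) (ρ y)
          + f2 y * (starRingEnd ℂ) (J y)).re
        = (f2 y * conj' (J y)).re - α * (f1 y * conj' (ρ y)).re := by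
      intro y
      rw [show -(α : ℂ) * f1 y * (starRingEnd ℂ) (ρ y) + f2 y * (starRingEnd ℂ) (J y)
        = f2 y * conj' (J y) - (α : ℂ) * (f1 y * conj' (ρ y)) from by ring,
        Complex.sub_re, Complex.re_ofReal_mul]
    simp only [hpt]
    rw [integral_sub (cint_re' iT7) ((cint_re' iT2).const_mul α), integral_const_mul]
  rw [rhs1]
  linear_combination (-α) * key1 + key2 + (k ^ 2 / 2) * key3 + α * F1 + β * F2
    + μ * F3 + (k ^ 2 / 2) * F4
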